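/- Let H ≤ K' ≤ K ≤ G with H normal (in fact central) in K', the index [K : K'] finite, and K ≤ Comm_G(H). Then there exists a finite index subgroup H' ≤ H which is normal in K. Namely, if s₁,...,sₙ are representatives of the left cosets of K' in K, then H' = ⋂ᵢ sᵢHsᵢ⁻¹ has finite index in H and is normal in K. -/

import Mathlib

open Subgroup Pointwise

private lemma map_conj_eq_smul {G : Type*} [Group G] (g : G) (H : Subgroup G) :
    Subgroup.map (MulAut.conj g).toMonoidHom H = ConjAct.toConjAct g • H := by
  ext x
  simp only [Subgroup.mem_map, Subgroup.mem_pointwise_smul_iff_inv_smul_mem,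
    ConjAct.smul_def, ConjAct.ofConjAct_inv, ConjAct.ofConjAct_toConjAct,
    MulEquiv.coe_toMonoidHom, MulAut.conj_apply]
  constructor
  · rintro ⟨h, hh, rfl⟩
    simpa [mul_assoc] using hh
  · intro hx
    exact ⟨g⁻¹ * x * g⁻¹⁻¹, hx, by group⟩

private lemma map_conj_mul {G : Type*} [Group G] (a b : G) (H : Subgroup G) :
    Subgroup.map (MulAut.conj (a * b)).toMonoidHom H =
      Subgroup.map (MulAut.conj a).toMonoidHom
        (Subgroup.map (MulAut.conj b).toMonoidHom H) := by
  rw [Subgroup.map_map]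
  congr 1
  ext x
  simp [mul_assoc]

/-- Let `H ≤ K' ≤ K ≤ Comm_G(H)` with `H` central in `K'` and `[K : K']` finite.
Then `H' = ⋂ᵢ sᵢ H sᵢ⁻¹`, where the `sᵢ` run over a set of representatives of the
left cosets of `K'` in `K`, is a finite index subgroup of `H` which is normal in `K`.
We state the existence of such a finite index subgroup of `H` normal in `K`. -/
theorem stmt_5 {G : Type*} [Group G] (H K' K : Subgroup G)
    (h1 : H ≤ K') (h2 : K' ≤ K) (h3 : K ≤ Commensurable.commensurator H)
    (hcentral : ∀ k ∈ K', ∀ h ∈ H, Commute k h)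
    (hfi : K'.relIndex K ≠ 0) :
    ∃ H' : Subgroup G, H' ≤ H ∧ H'.relIndex H ≠ 0 ∧
      ∀ k ∈ K, Subgroup.map (MulAut.conj k).toMonoidHom H' = H' := by
  classical
  -- conjugation by elements of `K'` fixes `H`
  have hfix : ∀ k' ∈ K', Subgroup.map (MulAut.conj k').toMonoidHom H = H := by
    intro k' hk'
    apply le_antisymm
    · rintro _ ⟨h, hh, rfl⟩
      have : k' * h * k'⁻¹ = h := by
        rw [(hcentral k' hk' h hh).eq]; group
      simpa [this] using hh
    · intro h hh
      refine ⟨h, hh, ?_⟩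
      simp only [MulEquiv.coe_toMonoidHom, MulAut.conj_apply]
      rw [(hcentral k' hk' h hh).eq]; group
  have hcoset : ∀ (g : G), ∀ k' ∈ K',
      Subgroup.map (MulAut.conj (g * k')).toMonoidHom H =
        Subgroup.map (MulAut.conj g).toMonoidHom H := by
    intro g k' hk'
    rw [map_conj_mul, hfix k' hk']
  -- the quotient is finite
  have hQfin : Finite (K ⧸ K'.subgroupOf K) := by
    have : Nat.card (K ⧸ K'.subgroupOf K) ≠ 0 := hfi
    exact Nat.finite_of_card_ne_zero this
  -- the well-defined function on the quotient
  set F : (K ⧸ K'.subgroupOf K) → Subgroup G :=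
    Quotient.lift (fun k : K => Subgroup.map (MulAut.conj (k : G)).toMonoidHom H)
      (by
        intro a b hab
        have hab' : (a : G)⁻¹ * b ∈ K' := by
          have := (QuotientGroup.leftRel_apply).mp hab
          simpa [Subgroup.mem_subgroupOf] using this
        show Subgroup.map (MulAut.conj (a : G)).toMonoidHom H =
          Subgroup.map (MulAut.conj (b : G)).toMonoidHom H
        have hb : (b : G) = a * ((a : G)⁻¹ * b) := by group
        rw [hb, hcoset _ _ hab']) with hF
  have hFmk : ∀ k : K, F (QuotientGroup.mk k) =
      Subgroup.map (MulAut.conj (k : G)).toMonoidHom H := fun k => rfl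
  refine ⟨⨅ q, F q, ?_, ?_, ?_⟩
  · -- ≤ H
    have h1' : F (QuotientGroup.mk (1 : K)) = H := by
      rw [hFmk]; ext x; simp
    calc (⨅ q, F q) ≤ F (QuotientGroup.mk (1 : K)) := iInf_le F _
      _ = H := h1'
  · -- finite relindex
    apply Subgroup.relIndex_iInf_ne_zero
    intro q
    induction q using Quotient.inductionOn with
    | h k =>
      rw [hFmk]
      have hk : (k : G) ∈ Commensurable.commensurator H := h3 k.2
      have := (Commensurable.commensurator_mem_iff H (k : G)).mp hk
      rw [map_conj_eq_smul]
      exact this.1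
  · -- normal in K
    intro k hk
    have hinj : Function.Injective (MulAut.conj k).toMonoidHom :=
      (MulAut.conj k).injective
    rw [Subgroup.map_iInf _ hinj]
    have key : ∀ q, Subgroup.map (MulAut.conj k).toMonoidHom (F q) =
        F ((⟨k, hk⟩ : K) • q) := by
      intro q
      induction q using Quotient.inductionOn with
      | h x =>
        have hsm : (⟨k, hk⟩ : K) • (QuotientGroup.mk x : K ⧸ K'.subgroupOf K) =
            QuotientGroup.mk ((⟨k, hk⟩ : K) * x) :=
          MulAction.Quotient.smul_mk _ _ _
        rw [hsm, hFmk, hFmk, ← map_conj_mul]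
        rfl
    simp_rw [key]
    apply le_antisymm
    · exact le_iInf fun q => iInf_le_of_le ((⟨k, hk⟩ : K)⁻¹ • q) (by rw [smul_inv_smul])
    · exact le_iInf fun q => iInf_le _ _
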